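/- Let n ≥ 4 with n divisible by 4, let C_n be the cycle graph on n vertices, let S be a multiset of positive integers with |S| = n, and let k be a nonnegative integer. Then C_n is S-fair with fairness constant k if and only if there exist positive integers a, b with a < k and b < k such that S equals the multiset consisting of each of a, b, k−a, k−b repeated n/4 times (as a multiset disjoint union, so coincidences among a, b, k−a, k−b add multiplicities). -/

import Mathlib

open scoped Classical

/-- Sum of labels over the open neighborhood of `v`. -/
noncomputable def nbrSum {V : Type*} [Fintype V] (G : SimpleGraph V) (f : V → ℕ) (v : V) : ℕ :=
  ∑ u : V, if G.Adj v u then f u else 0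

/-- `f` is a bijective labeling of `G` by the multiset `S` witnessing fairness constant `k`. -/
def IsFairLabeling {V : Type*} [Fintype V] (G : SimpleGraph V) (S : Multiset ℕ)
    (f : V → ℕ) (k : ℕ) : Prop :=
  Finset.univ.val.map f = S ∧ ∀ v : V, nbrSum G f v = k

/-- `G` is `S`-fair. -/
def IsFair {V : Type*} [Fintype V] (G : SimpleGraph V) (S : Multiset ℕ) : Prop :=
  ∃ (f : V → ℕ) (k : ℕ), IsFairLabeling G S f k

section helpers

lemma fin_sub_one_val {n : ℕ} [NeZero n] (hn : 4 ≤ n) (v : Fin n) :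
    ((v - 1 : Fin n) : ℕ) = if v.val = 0 then n - 1 else v.val - 1 := by
  have h1 : ((1 : Fin n) : ℕ) = 1 := by rw [Fin.val_one']; exact Nat.mod_eq_of_lt (by omega)
  rw [Fin.sub_def]
  simp only [h1]
  have hv := v.isLt
  split_ifs with h
  · rw [h]; exact Nat.mod_eq_of_lt (by omega)
  · have e : n - 1 + v.val = (v.val - 1) + n := by omega
    rw [e, Nat.add_mod_right]
    exact Nat.mod_eq_of_lt (by omega)

lemma fin_add_one_val {n : ℕ} [NeZero n] (hn : 4 ≤ n) (v : Fin n) :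
    ((v + 1 : Fin n) : ℕ) = if v.val + 1 = n then 0 else v.val + 1 := by
  have h1 : ((1 : Fin n) : ℕ) = 1 := by rw [Fin.val_one']; exact Nat.mod_eq_of_lt (by omega)
  rw [Fin.add_def]
  simp only [h1]
  have hv := v.isLt
  split_ifs with h
  · rw [h, Nat.mod_self]
  · exact Nat.mod_eq_of_lt (by omega)

lemma nbrSum_cycle {n : ℕ} [NeZero n] (hn : 4 ≤ n) (f : Fin n → ℕ) (v : Fin n) :
    nbrSum (SimpleGraph.cycleGraph n) f v = f (v - 1) + f (v + 1) := by
  have h1 : ((1 : Fin n) : ℕ) = 1 := by rw [Fin.val_one']; exact Nat.mod_eq_of_lt (by omega)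
  have hv := v.isLt
  have hne : v - 1 ≠ v + 1 := by
    intro h
    rw [Fin.ext_iff, fin_sub_one_val hn, fin_add_one_val hn] at h
    split_ifs at h <;> omega
  have hadj : ∀ u : Fin n, (SimpleGraph.cycleGraph n).Adj v u ↔ (u = v - 1 ∨ u = v + 1) := by
    intro u
    rw [SimpleGraph.cycleGraph_adj']
    constructor
    · rintro (h | h)
      · left
        have h' : v - u = 1 := Fin.ext (by rw [h1]; exact h)
        rw [sub_eq_iff_eq_add] at h'
        rw [h', add_comm, add_sub_cancel_right]
      · right
        have h' : u - v = 1 := Fin.ext (by rw [h1]; exact h)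
        rw [sub_eq_iff_eq_add] at h'
        rw [h', add_comm]
    · rintro (rfl | rfl)
      · left; rw [sub_sub_cancel, h1]
      · right; rw [add_sub_cancel_left, h1]
  unfold nbrSum
  simp only [hadj]
  have hsplit : ∀ u : Fin n, (if (u = v - 1 ∨ u = v + 1) then f u else 0)
      = (if u = v - 1 then f u else 0) + (if u = v + 1 then f u else 0) := by
    intro u
    by_cases hu1 : u = v - 1 <;> by_cases hu2 : u = v + 1 <;> simp_all
  simp only [hsplit]
  rw [Finset.sum_add_distrib, Finset.sum_ite_eq' Finset.univ, Finset.sum_ite_eq' Finset.univ]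
  simp

lemma key_multiset (m : ℕ) (g : ℕ → ℕ) :
    Finset.univ.val.map (fun i : Fin (4 * m) => g (i.val % 4)) =
      Multiset.replicate m (g 0) + Multiset.replicate m (g 1) +
      Multiset.replicate m (g 2) + Multiset.replicate m (g 3) := by
  induction m with
  | zero => simp
  | succ m ih =>
    rw [Fin.univ_val_map] at ih ⊢
    rw [List.ofFn_congr (show 4 * (m + 1) = 4 * m + 4 by ring), List.ofFn_add]
    simp only [Fin.coe_cast, Fin.coe_castAdd, Fin.coe_natAdd, Fin.coe_castLE]
    have hB : (List.ofFn fun j : Fin 4 => g ((4 * m + (j : ℕ)) % 4))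
        = [g 0, g 1, g 2, g 3] := by
      simp [List.ofFn_succ, Nat.mul_add_mod]
    rw [hB, ← Multiset.coe_add, ih]
    have hC : ([g 0, g 1, g 2, g 3] : Multiset ℕ)
        = {g 0} + {g 1} + {g 2} + {g 3} := rfl
    rw [hC]
    simp only [Multiset.replicate_succ, ← Multiset.singleton_add]
    abel

end helpers

/-- for `4 ∣ n`, the cycle `C_n` is `S`-fair with fairness constant `k` iff
`S` consists of `a, b, k-a, k-b` each repeated `n/4` times, for some `0 < a, b < k`. -/
theorem stmt_8 (n : ℕ) (hn : 4 ≤ n) (hdvd : 4 ∣ n)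
    (S : Multiset ℕ) (hSpos : ∀ s ∈ S, 0 < s) (hScard : Multiset.card S = n) (k : ℕ) :
    (∃ f, IsFairLabeling (SimpleGraph.cycleGraph n) S f k) ↔
      ∃ a b : ℕ, 0 < a ∧ 0 < b ∧ a < k ∧ b < k ∧
        S = Multiset.replicate (n / 4) a + Multiset.replicate (n / 4) b +
            Multiset.replicate (n / 4) (k - a) + Multiset.replicate (n / 4) (k - b) := by
  obtain ⟨m, rfl⟩ := hdvd
  haveI : NeZero (4 * m) := ⟨by omega⟩
  have hm : 4 * m / 4 = m := by omega
  constructor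
  · rintro ⟨f, hmap, hsum⟩
    have hpos : ∀ v : Fin (4 * m), 0 < f v := by
      intro v
      apply hSpos
      rw [← hmap]
      exact Multiset.mem_map.2 ⟨v, by simp, rfl⟩
    have rel : ∀ j, ∀ (h : j + 2 < 4 * m), f ⟨j, by omega⟩ + f ⟨j + 2, h⟩ = k := by
      intro j h
      have hv := hsum ⟨j + 1, by omega⟩
      rw [nbrSum_cycle (by omega)] at hv
      have e1 : ((⟨j + 1, by omega⟩ : Fin (4 * m)) - 1) = ⟨j, by omega⟩ := by
        rw [Fin.ext_iff, fin_sub_one_val (by omega)]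
        simp
      have e2 : ((⟨j + 1, by omega⟩ : Fin (4 * m)) + 1) = ⟨j + 2, h⟩ := by
        rw [Fin.ext_iff, fin_add_one_val (by omega)]
        split_ifs <;> simp_all <;> omega
      rw [e1, e2] at hv
      exact hv
    set a := f ⟨0, by omega⟩ with ha_def
    set b := f ⟨1, by omega⟩ with hb_def
    have ha_lt : a < k := by
      have h1 := rel 0 (by omega)
      have h2 := hpos ⟨2, by omega⟩
      simp only [zero_add] at h1
      omega
    have hb_lt : b < k := by
      have h1 := rel 1 (by omega)
      have h2 := hpos ⟨3, by omega⟩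
      norm_num at h1
      omega
    set g : ℕ → ℕ := fun r => if r = 0 then a else if r = 1 then b else
      if r = 2 then k - a else k - b with hg_def
    have claim : ∀ j, ∀ (h : j < 4 * m), f ⟨j, h⟩ = g (j % 4) := by
      intro j
      induction j using Nat.strong_induction_on with
      | _ j ih =>
        intro h
        match j with
        | 0 => simp [hg_def, ha_def]
        | 1 => simp [hg_def, hb_def]
        | (j + 2) =>
          have hj : j < 4 * m := by omega
          have e1 := rel j h
          have e2 := ih j (by omega) hj
          have h42 : (j + 2) % 4 = (j % 4 + 2) % 4 := by omega
          have h4 : j % 4 = 0 ∨ j % 4 = 1 ∨ j % 4 = 2 ∨ j % 4 = 3 := by omega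
          rw [e2] at e1
          rw [h42]
          rcases h4 with h4 | h4 | h4 | h4 <;>
            rw [h4] at e1 ⊢ <;> simp [hg_def] at e1 ⊢ <;> omega
    refine ⟨a, b, hpos _, hpos _, ha_lt, hb_lt, ?_⟩
    rw [← hmap, hm]
    have hf : f = fun v : Fin (4 * m) => g (v.val % 4) := by
      funext v
      rw [← claim v.val v.isLt]
    rw [hf, key_multiset]
    simp [hg_def]
  · rintro ⟨a, b, ha0, hb0, hak, hbk, rfl⟩
    set g : ℕ → ℕ := fun r => if r = 0 then a else if r = 1 then b else
      if r = 2 then k - a else k - b with hg_def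
    refine ⟨fun v : Fin (4 * m) => g (v.val % 4), ?_, ?_⟩
    · rw [key_multiset, hm]
      simp [hg_def]
    · intro v
      rw [nbrSum_cycle (by omega)]
      have hv := v.isLt
      show g ((v - 1 : Fin (4 * m)).val % 4) + g ((v + 1 : Fin (4 * m)).val % 4) = k
      rw [fin_sub_one_val (by omega), fin_add_one_val (by omega)]
      have e1 : (if v.val = 0 then 4 * m - 1 else v.val - 1) % 4 = (v.val + 3) % 4 := by
        split_ifs <;> omega
      have e2 : (if v.val + 1 = 4 * m then 0 else v.val + 1) % 4 = (v.val + 1) % 4 := by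
        split_ifs <;> omega
      rw [e1, e2]
      have hr : v.val % 4 = 0 ∨ v.val % 4 = 1 ∨ v.val % 4 = 2 ∨ v.val % 4 = 3 := by omega
      rcases hr with h | h | h | h
      · rw [show (v.val + 3) % 4 = 3 by omega, show (v.val + 1) % 4 = 1 by omega]
        simp [hg_def]; omega
      · rw [show (v.val + 3) % 4 = 0 by omega, show (v.val + 1) % 4 = 2 by omega]
        simp [hg_def]; omega
      · rw [show (v.val + 3) % 4 = 1 by omega, show (v.val + 1) % 4 = 3 by omega]
        simp [hg_def]; omega
      · rw [show (v.val + 3) % 4 = 2 by omega, show (v.val + 1) % 4 = 0 by omega]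
        simp [hg_def]; omega
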